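/- Let Ξ be an n×n Hermitian positive semidefinite complex matrix. Then there exists a 1×n complex row vector ξ such that for every θ ∈ [0, 2π], G(e^{iθ})* Ξ G(e^{iθ}) = |ξ G(e^{iθ})|², where G(z) = (I − zA)⁻¹B; that is, the nonnegative scalar function G^⋆ Ξ G on the unit circle factors as (ξG)^⋆ (ξG). -/

import Mathlib

open Polynomial Complex Filter Topology
open scoped ComplexOrder Real

noncomputable section
namespace SpecFact

def e (θ : ℝ) : ℂ := Complex.exp (θ * Complex.I)

lemma e_ne_zero (θ : ℝ) : e θ ≠ 0 := Complex.exp_ne_zero _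

lemma conj_e (θ : ℝ) : (starRingEnd ℂ) (e θ) = (e θ)⁻¹ := by
  rw [e, ← Complex.exp_conj, ← Complex.exp_neg]
  congr 1
  simp [Complex.conj_I]

lemma continuous_e : Continuous e :=
  Complex.continuous_exp.comp (by continuity)

lemma e_pow (θ : ℝ) (m : ℕ) : (e θ) ^ m = e (m * θ) := by
  rw [e, e, ← Complex.exp_nat_mul]
  push_cast
  ring_nf

lemma e_inj {a b : ℝ} (hd : |a - b| < 1) (hab : e a = e b) : a = b := by
  rw [e, e, Complex.exp_eq_exp_iff_exists_int] at hab
  obtain ⟨k, hk⟩ := hab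
  have hk' : (a : ℂ) * I = ((b + 2 * π * k : ℝ) : ℂ) * I := by
    rw [hk]; push_cast; ring
  have hreal : a = b + 2 * π * k :=
    Complex.ofReal_injective (mul_right_cancel₀ Complex.I_ne_zero hk')
  have hk0 : k = 0 := by
    by_contra hne
    have h1 : (1:ℝ) ≤ |(k:ℝ)| := by exact_mod_cast Int.one_le_abs hne
    have h2 : |a - b| = 2 * π * |(k:ℝ)| := by
      rw [hreal]
      rw [show b + 2*π*k - b = 2*π*(k:ℝ) by ring, abs_mul, abs_of_pos (by positivity)]
    nlinarith [Real.pi_gt_three]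
  rw [hk0] at hreal
  simpa using hreal

lemma eq_on_circle {p q : ℂ[X]} (h : ∀ θ : ℝ, p.eval (e θ) = q.eval (e θ)) : p = q := by
  rw [← sub_eq_zero]
  apply eq_zero_of_infinite_isRoot
  have hinf : (Set.Ioo (0:ℝ) 1).Infinite := Set.Ioo_infinite (by norm_num)
  apply Set.Infinite.mono _ (hinf.image (fun a ha b hb hab => by
    refine e_inj ?_ hab
    rw [abs_lt]
    obtain ⟨ha1, ha2⟩ := ha; obtain ⟨hb1, hb2⟩ := hb
    constructor <;> linarith))
  rintro x ⟨θ, -, rfl⟩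
  simp [IsRoot, h θ]

lemma tendsto_nonneg {l : Filter ℝ} [l.NeBot] {g : ℝ → ℂ} {L : ℂ}
    (h : Tendsto g l (nhds L)) (hg : ∀ᶠ θ in l, 0 ≤ g θ) : 0 ≤ L := by
  have hre : 0 ≤ L.re := ge_of_tendsto ((Complex.continuous_re.tendsto L).comp h)
    (hg.mono fun θ hθ => by simpa using (Complex.le_def.1 hθ).1)
  have him : L.im = 0 := tendsto_nhds_unique ((Complex.continuous_im.tendsto L).comp h)
    (tendsto_const_nhds.congr' (hg.mono fun θ hθ => by simpa using (Complex.le_def.1 hθ).2))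
  exact Complex.le_def.2 ⟨by simpa using hre, by simp [him]⟩

lemma natDegree_reflect_le {p : ℂ[X]} {N : ℕ} (hp : p.natDegree ≤ N) :
    (reflect N p).natDegree ≤ N := by
  rw [natDegree_le_iff_coeff_eq_zero]
  intro i hi
  rw [coeff_reflect, revAt_eq_self_of_lt hi]
  exact coeff_eq_zero_of_natDegree_lt (lt_of_le_of_lt hp hi)

lemma eval_reflect {p : ℂ[X]} {N : ℕ} (hp : p.natDegree ≤ N) {z : ℂ} (hz : z ≠ 0) :
    (reflect N p).eval z = z ^ N * p.eval z⁻¹ := by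
  rw [eval_eq_sum_range' (Nat.lt_succ_of_le (natDegree_reflect_le hp)) z,
    eval_eq_sum_range' (Nat.lt_succ_of_le hp) z⁻¹, Finset.mul_sum]
  have : ∀ i ∈ Finset.range (N+1), (reflect N p).coeff i * z ^ i
      = p.coeff (N - i) * z ^ i := by
    intro i hi
    rw [coeff_reflect, revAt_le (Nat.lt_succ_iff.1 (Finset.mem_range.1 hi))]
  rw [Finset.sum_congr rfl this, ← Finset.sum_range_reflect (fun i => p.coeff (N - i) * z ^ i) (N+1)]
  refine Finset.sum_congr rfl fun j hj => ?_
  have hjN : j ≤ N := Nat.lt_succ_iff.1 (Finset.mem_range.1 hj)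
  have h1 : N + 1 - 1 - j = N - j := by omega
  have h2 : N - (N - j) = j := by omega
  rw [h1, h2]
  rw [mul_comm (z ^ N) _, mul_assoc]
  congr 1
  rw [inv_pow, mul_comm, ← pow_sub₀ z hz hjN]

lemma eval_map_conj (p : ℂ[X]) (z : ℂ) :
    (p.map (starRingEnd ℂ)).eval ((starRingEnd ℂ) z) = (starRingEnd ℂ) (p.eval z) := by
  rw [eval_map, eval₂_at_apply]

lemma reflect_conj_eq {d : ℕ} {F : ℂ[X]} (hdeg : F.natDegree ≤ 2*d)
    (hpos : ∀ θ : ℝ, 0 ≤ F.eval (e θ) / (e θ)^d) :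
    reflect (2*d) (F.map (starRingEnd ℂ)) = F := by
  apply eq_on_circle
  intro θ
  have hz0 : e θ ≠ 0 := e_ne_zero θ
  rw [eval_reflect ((natDegree_map_le.trans hdeg)) hz0]
  rw [show (e θ)⁻¹ = (starRingEnd ℂ) (e θ) from (conj_e θ).symm, eval_map_conj]
  obtain ⟨hre, him⟩ := Complex.le_def.1 (hpos θ)
  have hcreal : (starRingEnd ℂ) (F.eval (e θ) / (e θ)^d) = F.eval (e θ) / (e θ)^d :=
    Complex.conj_eq_iff_im.2 (by simpa using him.symm)
  have hF : F.eval (e θ) = (F.eval (e θ) / (e θ)^d) * (e θ)^d := by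
    field_simp
  rw [hF, map_mul, hcreal, map_pow, conj_e]
  rw [two_mul, pow_add]
  field_simp
  rw [one_div, inv_pow, mul_comm (e θ ^ d), mul_assoc, mul_inv_cancel₀ (pow_ne_zero _ hz0), mul_one]

lemma coeff_symm {d : ℕ} {F : ℂ[X]} (hsymm : reflect (2*d) (F.map (starRingEnd ℂ)) = F)
    {k : ℕ} (hk : k ≤ 2*d) : F.coeff k = (starRingEnd ℂ) (F.coeff (2*d - k)) := by
  conv_lhs => rw [← hsymm]
  rw [coeff_reflect, revAt_le hk, coeff_map]


theorem fejer_riesz (d : ℕ) : ∀ (F : ℂ[X]), F.natDegree ≤ 2*d →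
    (∀ θ : ℝ, 0 ≤ F.eval (e θ) / (e θ)^d) →
    ∃ r : ℂ[X], r.natDegree ≤ d ∧ ∀ θ : ℝ,
      F.eval (e θ) = (starRingEnd ℂ) (r.eval (e θ)) * r.eval (e θ) * (e θ)^d := by
  induction d with
  | zero =>
    intro F hdeg hpos
    have hF := eq_C_of_natDegree_le_zero (by simpa using hdeg)
    have he0 : e 0 = 1 := by simp [e]
    have ha : 0 ≤ F.coeff 0 := by
      have h := hpos 0
      rw [hF, eval_C, he0] at h
      simpa using h
    obtain ⟨hre, him⟩ := Complex.le_def.1 ha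
    refine ⟨C ((Real.sqrt (F.coeff 0).re : ℝ) : ℂ), by simp, fun θ => ?_⟩
    rw [hF]
    simp only [eval_C, pow_zero, mul_one, Complex.conj_ofReal]
    rw [← Complex.ofReal_mul, Real.mul_self_sqrt (by simpa using hre)]
    exact Complex.ext (by simp) (by simpa using him.symm)
  | succ d IH =>
    intro F hdeg hpos
    by_cases hF0 : F = 0
    · exact ⟨0, by simp, by simp [hF0]⟩
    have hsymm := reflect_conj_eq hdeg hpos
    have hdegpos : 0 < F.natDegree := by
      rcases Nat.eq_zero_or_pos F.natDegree with h0 | h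
      · exfalso
        have hFC := eq_C_of_natDegree_le_zero h0.le
        have ha0 : F.coeff 0 ≠ 0 := fun h => hF0 (by rw [hFC, h, map_zero])
        have he0 : e 0 = 1 := by simp [e]
        have h1 : 0 ≤ F.coeff 0 := by
          have h := hpos 0
          rw [hFC, eval_C, he0] at h
          simpa using h
        have hpow : (e (π/(d+1)))^(d+1) = -1 := by
          rw [e_pow]
          rw [show ((d+1 : ℕ) : ℝ) * (π/(d+1)) = π by push_cast; field_simp]
          rw [e]
          exact_mod_cast Complex.exp_pi_mul_I
        have h2 : F.coeff 0 ≤ 0 := by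
          have h := hpos (π/(d+1))
          rw [hFC, eval_C, hpow, div_neg, div_one] at h
          exact neg_nonneg.1 h
        exact ha0 (le_antisymm h2 h1)
      · exact h
    obtain ⟨ρ, hρ⟩ := Complex.exists_root (natDegree_pos_iff_degree_pos.1 hdegpos)
    by_cases hρ0 : ρ = 0
    · -- zero root case
      subst hρ0
      have hc0 : F.coeff 0 = 0 := by rwa [coeff_zero_eq_eval_zero]
      have hctop : F.coeff (2*(d+1)) = 0 := by
        have := coeff_symm hsymm (le_refl (2*(d+1)))
        rw [Nat.sub_self, hc0, map_zero] at this
        exact this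
      have hdeg' : F.natDegree ≤ 2*d+1 := by
        have hne : F.natDegree ≠ 2*(d+1) := fun h =>
          hF0 (leadingCoeff_eq_zero.1 (by rw [leadingCoeff, h]; exact hctop))
        omega
      obtain ⟨H, hH⟩ := X_dvd_iff.2 hc0
      have hHne : H ≠ 0 := by rintro rfl; rw [mul_zero] at hH; exact hF0 hH
      have hHdeg : H.natDegree ≤ 2*d := by
        have h1 : F.natDegree = 1 + H.natDegree := by
          rw [hH, natDegree_mul X_ne_zero hHne, natDegree_X]
        omega
      have hHpos : ∀ θ : ℝ, 0 ≤ H.eval (e θ) / (e θ)^d := by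
        intro θ
        have h := hpos θ
        have hz0 := e_ne_zero θ
        rw [hH, eval_mul, eval_X] at h
        rw [show e θ * H.eval (e θ) / (e θ)^(d+1) = H.eval (e θ) / (e θ)^d by
          rw [pow_succ]; field_simp] at h
        exact h
      obtain ⟨r, hrdeg, hr⟩ := IH H hHdeg hHpos
      refine ⟨X * r, natDegree_mul_le.trans (by simp [natDegree_X]; omega), fun θ => ?_⟩
      have hz0 := e_ne_zero θ
      have hcz : (starRingEnd ℂ) (e θ) * e θ = 1 := by
        rw [conj_e]; field_simp
      rw [hH, eval_mul, eval_X, hr θ, eval_mul, eval_X, map_mul]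
      linear_combination (-((starRingEnd ℂ) (r.eval (e θ)) * r.eval (e θ) * (e θ)^(d+1))) * hcz
    · -- nonzero root
      have hcρ : (starRingEnd ℂ) ρ ≠ 0 := by simpa using hρ0
      set σ := ((starRingEnd ℂ) ρ)⁻¹ with hσ
      have hσ0 : σ ≠ 0 := inv_ne_zero hcρ
      have hσroot : F.eval σ = 0 := by
        conv_lhs => rw [← hsymm]
        rw [eval_reflect (natDegree_map_le.trans hdeg) hσ0]
        rw [show σ⁻¹ = (starRingEnd ℂ) ρ from by rw [hσ, inv_inv], eval_map_conj]
        rw [show F.eval ρ = 0 from hρ, map_zero, mul_zero]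
      have hdvd : (X - C ρ) * (X - C σ) ∣ F := by
        by_cases hρσ : ρ = σ
        · -- double root on the circle
          have hmulconj : ρ * (starRingEnd ℂ) ρ = 1 := by
            nth_rewrite 1 [hρσ]
            rw [hσ, inv_mul_cancel₀ hcρ]
          have hnormSq : Complex.normSq ρ = 1 := by
            have h : ((Complex.normSq ρ : ℝ) : ℂ) = 1 := by
              rw [← Complex.mul_conj, hmulconj]
            exact_mod_cast h
          set θ₀ := ρ.arg with hθ₀
          have he₀ : e θ₀ = ρ := by
            have habs : ‖ρ‖ = 1 := by
              have h0 := Complex.sq_norm ρ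
              nlinarith [norm_nonneg ρ]
            have h := Complex.norm_mul_exp_arg_mul_I ρ
            rw [habs] at h
            simpa [e] using h
          obtain ⟨H₁, hH₁⟩ := dvd_iff_isRoot.2 hρ
          have hH₁root : H₁.eval ρ = 0 := by
            have hderiv : HasDerivAt e (ρ * Complex.I) θ₀ := by
              have h1 : HasDerivAt (fun t : ℝ => (t:ℂ) * Complex.I) Complex.I θ₀ := by
                simpa using (Complex.ofRealCLM.hasDerivAt (x := θ₀)).mul_const Complex.I
              have h2 := h1.cexp
              rw [show Complex.exp ((θ₀:ℂ) * Complex.I) = ρ from he₀] at h2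
              exact h2
            have hslope := hasDerivAt_iff_tendsto_slope.1 hderiv
            have hcont2 : Tendsto (fun θ' => H₁.eval (e θ') / (e θ')^(d+1)) (𝓝[≠] θ₀)
                (nhds (H₁.eval ρ / ρ^(d+1))) := by
              apply Tendsto.mono_left _ nhdsWithin_le_nhds
              have hc : Continuous (fun θ' : ℝ => H₁.eval (e θ') / (e θ')^(d+1)) :=
                Continuous.div (H₁.continuous.comp continuous_e) (continuous_e.pow (d+1))
                  (fun x => pow_ne_zero _ (e_ne_zero x))
              have h := hc.tendsto θ₀
              rwa [he₀] at h
            have hmul := hslope.mul hcont2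
            set L := (ρ * Complex.I) * (H₁.eval ρ / ρ^(d+1)) with hL
            have hfun : ∀ θ' : ℝ, θ' ≠ θ₀ → slope e θ₀ θ' * (H₁.eval (e θ') / (e θ')^(d+1))
                = (F.eval (e θ') / (e θ')^(d+1)) * ((((θ' - θ₀)⁻¹ : ℝ)) : ℂ) := by
              intro θ' hne
              have hne' : ((θ' - θ₀ : ℝ) : ℂ) ≠ 0 := by
                exact_mod_cast sub_ne_zero.2 hne
              have hz0' := e_ne_zero θ'
              rw [slope_def_module, Complex.real_smul]
              rw [hH₁]
              simp only [eval_mul, eval_sub, eval_X, eval_C]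
              rw [he₀]
              push_cast
              field_simp
            have hsubR : Set.Ioi θ₀ ⊆ {θ₀}ᶜ := fun x hx => Set.mem_compl_singleton_iff.mpr (ne_of_gt (Set.mem_Ioi.mp hx))
            have hsubL : Set.Iio θ₀ ⊆ {θ₀}ᶜ := fun x hx => Set.mem_compl_singleton_iff.mpr (ne_of_lt (Set.mem_Iio.mp hx))
            have hR : 0 ≤ L := by
              refine tendsto_nonneg (hmul.mono_left (nhdsWithin_mono θ₀ hsubR)) ?_
              filter_upwards [self_mem_nhdsWithin] with θ' hθ'
              have hgt : θ₀ < θ' := hθ'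
              rw [hfun θ' (ne_of_gt hgt)]
              exact mul_nonneg (hpos θ') (Complex.zero_le_real.2 (inv_nonneg.2 (by linarith)))
            have hLle : L ≤ 0 := by
              have hneg : 0 ≤ -L := by
                refine tendsto_nonneg ((hmul.mono_left (nhdsWithin_mono θ₀ hsubL)).neg) ?_
                filter_upwards [self_mem_nhdsWithin] with θ' hθ'
                have hlt : θ' < θ₀ := hθ'
                rw [hfun θ' (ne_of_lt hlt)]
                have h1 : ((θ₀ - θ' : ℝ))⁻¹ = -((θ' - θ₀ : ℝ)⁻¹) := by
                  rw [← neg_sub θ' θ₀, inv_neg]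
                have h2 : -(F.eval (e θ') / (e θ')^(d+1) * (((θ' - θ₀)⁻¹ : ℝ) : ℂ))
                    = F.eval (e θ') / (e θ')^(d+1) * (((θ₀ - θ')⁻¹ : ℝ) : ℂ) := by
                  rw [h1]
                  push_cast
                  ring
                rw [h2]
                exact mul_nonneg (hpos θ') (Complex.zero_le_real.2 (inv_nonneg.2 (by linarith)))
              exact neg_nonneg.1 hneg
            have hL0 : L = 0 := le_antisymm hLle hR
            have hne1 : ρ * Complex.I ≠ 0 := mul_ne_zero hρ0 Complex.I_ne_zero
            have h3 : H₁.eval ρ / ρ^(d+1) = 0 := by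
              rcases mul_eq_zero.1 hL0 with h | h
              · exact absurd h hne1
              · exact h
            rcases div_eq_zero_iff.1 h3 with h | h
            · exact h
            · exact absurd h (pow_ne_zero _ hρ0)
          obtain ⟨H₂, hH₂⟩ := dvd_iff_isRoot.2 hH₁root
          rw [← hρσ]
          exact ⟨H₂, by rw [hH₁, hH₂]; ring⟩
        · have hcop : IsCoprime (X - C ρ) (X - C σ) :=
            isCoprime_X_sub_C_of_isUnit_sub (IsUnit.mk0 _ (sub_ne_zero.2 hρσ))
          exact hcop.mul_dvd (dvd_iff_isRoot.2 hρ) (dvd_iff_isRoot.2 hσroot)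
      obtain ⟨H, hH⟩ := hdvd
      have hprodne : (X - C ρ) * (X - C σ) ≠ 0 :=
        mul_ne_zero (X_sub_C_ne_zero ρ) (X_sub_C_ne_zero σ)
      have hHne : H ≠ 0 := by rintro rfl; rw [mul_zero] at hH; exact hF0 hH
      have hHdeg : H.natDegree ≤ 2*d := by
        have h1 : F.natDegree = 2 + H.natDegree := by
          rw [hH, natDegree_mul hprodne hHne,
            natDegree_mul (X_sub_C_ne_zero ρ) (X_sub_C_ne_zero σ),
            natDegree_X_sub_C, natDegree_X_sub_C]
        omega
      have hquad : ∀ θ : ℝ, (e θ - ρ) * (e θ - σ)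
          = -(((starRingEnd ℂ) ρ)⁻¹) * e θ * ((Complex.normSq (e θ - ρ) : ℝ) : ℂ) := by
        intro θ
        have hz0 : e θ ≠ 0 := e_ne_zero θ
        rw [← Complex.mul_conj, map_sub, conj_e, hσ]
        field_simp
        ring
      set H' := C (-((starRingEnd ℂ) ρ))⁻¹ * H with hH'def
      have hH'deg : H'.natDegree ≤ 2*d := natDegree_mul_le.trans (by simpa using hHdeg)
      have hHeval : ∀ z : ℂ, H.eval z = (-((starRingEnd ℂ) ρ)) * H'.eval z := by
        intro z
        rw [hH'def, eval_mul, eval_C]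
        rw [← mul_assoc, mul_inv_cancel₀ (neg_ne_zero.2 hcρ), one_mul]
      have hH'aux : ∀ θ : ℝ, e θ ≠ ρ → 0 ≤ H'.eval (e θ) / (e θ)^d := by
        intro θ hzρ
        have hz0 := e_ne_zero θ
        have hns : Complex.normSq (e θ - ρ) ≠ 0 := by
          simpa [Complex.normSq_eq_zero, sub_eq_zero] using hzρ
        have hns' : ((Complex.normSq (e θ - ρ) : ℝ) : ℂ) ≠ 0 := by exact_mod_cast hns
        have heq : H'.eval (e θ) / (e θ)^d
            = (F.eval (e θ) / (e θ)^(d+1)) * (((Complex.normSq (e θ - ρ))⁻¹ : ℝ) : ℂ) := by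
          rw [hH'def, hH]
          simp only [eval_mul, eval_sub, eval_X, eval_C]
          rw [hquad θ, pow_succ]
          push_cast
          field_simp
        rw [heq]
        exact mul_nonneg (hpos θ) (by
          rw [Complex.zero_le_real]
          exact inv_nonneg.2 (Complex.normSq_nonneg _))
      have hH'pos : ∀ θ : ℝ, 0 ≤ H'.eval (e θ) / (e θ)^d := by
        intro θ
        by_cases hzρ : e θ ≠ ρ
        · exact hH'aux θ hzρ
        · push_neg at hzρ
          have hcont : Tendsto (fun θ' => H'.eval (e θ') / (e θ')^d) (𝓝[≠] θ)
              (nhds (H'.eval (e θ) / (e θ)^d)) := by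
            apply Tendsto.mono_left _ nhdsWithin_le_nhds
            exact (Continuous.div (H'.continuous.comp continuous_e) (continuous_e.pow d)
              (fun x => pow_ne_zero _ (e_ne_zero x))).tendsto θ
          refine tendsto_nonneg hcont ?_
          have hmem : Set.Ioo (θ-1) (θ+1) ∈ 𝓝[≠] θ :=
            nhdsWithin_le_nhds (Ioo_mem_nhds (by linarith) (by linarith))
          filter_upwards [hmem, self_mem_nhdsWithin] with θ' h1 h2
          refine hH'aux θ' fun hcon => ?_
          have hee : e θ' = e θ := by rw [hcon, hzρ]
          have : θ' = θ := by
            refine e_inj ?_ hee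
            rw [abs_lt]
            obtain ⟨ha1, ha2⟩ := h1
            constructor <;> linarith
          exact h2 this
      obtain ⟨r, hrdeg, hr⟩ := IH H' hH'deg hH'pos
      refine ⟨(X - C ρ) * r, natDegree_mul_le.trans (by simp [natDegree_X_sub_C]; omega),
        fun θ => ?_⟩
      have hz0 := e_ne_zero θ
      rw [hH]
      simp only [eval_mul, eval_sub, eval_X, eval_C, map_mul, map_sub]
      rw [hquad θ, hHeval (e θ), hr θ, ← Complex.mul_conj, map_sub, pow_succ]
      field_simp

lemma natDegree_adjugate_entry {n : ℕ} (A : Matrix (Fin n) (Fin n) ℂ) (i j : Fin n) :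
    (((1 - (X : ℂ[X]) • A.map C).adjugate) i j).natDegree ≤ n - 1 := by
  rw [Matrix.adjugate_apply, Matrix.det_apply']
  apply natDegree_sum_le_of_forall_le
  intro σ _
  refine natDegree_mul_le.trans ?_
  rw [natDegree_intCast, zero_add]
  refine (natDegree_prod_le _ _).trans ?_
  have hbound : ∀ k : Fin n,
      ((((1 - (X : ℂ[X]) • A.map C).updateRow j (Pi.single i 1)) (σ k) k).natDegree)
        ≤ (if σ k = j then 0 else 1) := by
    intro k
    rw [Matrix.updateRow_apply]
    by_cases h : σ k = j
    · simp only [h, if_pos rfl, if_true]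
      rw [Pi.single_apply]
      split_ifs <;> simp
    · simp only [h, if_neg h, if_false]
      simp only [Matrix.sub_apply, Matrix.one_apply, Matrix.smul_apply, Matrix.map_apply,
        smul_eq_mul]
      refine (natDegree_sub_le _ _).trans ?_
      have h1 : (if σ k = k then (1:ℂ[X]) else 0).natDegree ≤ 1 := by
        split_ifs <;> simp
      have h2 : ((X : ℂ[X]) * C (A (σ k) k)).natDegree ≤ 1 := by
        refine natDegree_mul_le.trans ?_
        simp
      omega
  refine (Finset.sum_le_sum (fun k _ => hbound k)).trans ?_
  have hcard : (Finset.univ.filter (fun k : Fin n => σ k = j)).card = 1 := by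
    have heq : (Finset.univ.filter (fun k : Fin n => σ k = j)) = {σ.symm j} := by
      ext k
      simp [Equiv.apply_eq_iff_eq_symm_apply]
    rw [heq, Finset.card_singleton]
  have htot := Finset.card_filter_add_card_filter_not
    (s := (Finset.univ : Finset (Fin n))) (p := fun k => σ k = j)
  rw [Finset.sum_ite, Finset.sum_const, Finset.sum_const]
  simp only [smul_eq_mul, mul_zero, mul_one, zero_add]
  simp only [Finset.card_univ, Fintype.card_fin] at htot
  omega

end SpecFact

open SpecFact Matrix

set_option maxHeartbeats 1000000 in
theorem spectral_factorization_GXiG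
    {n : ℕ} (hn : 1 ≤ n)
    (A : Matrix (Fin n) (Fin n) ℂ) (B : Matrix (Fin n) (Fin 1) ℂ)
    (hA : ∀ μ ∈ spectrum ℂ A, ‖μ‖ < 1)
    (hreach : IsUnit (Matrix.of fun (i : Fin n) (j : Fin n) => (A ^ (j : ℕ) * B) i 0))
    (Ξ : Matrix (Fin n) (Fin n) ℂ)
    (hΞ : Ξ.PosSemidef) :
    ∃ ξ : Matrix (Fin 1) (Fin n) ℂ, ∀ θ ∈ Set.Icc (0:ℝ) (2 * Real.pi),
      ((((1 - Complex.exp (θ * Complex.I) • A)⁻¹ * B)ᴴ * Ξ *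
          ((1 - Complex.exp (θ * Complex.I) • A)⁻¹ * B) :
          Matrix (Fin 1) (Fin 1) ℂ) 0 0) =
        ((‖(ξ * ((1 - Complex.exp (θ * Complex.I) • A)⁻¹ * B) :
            Matrix (Fin 1) (Fin 1) ℂ) 0 0‖ : ℂ)) ^ 2 := by
  classical
  obtain ⟨M, hM⟩ : ∃ M : Matrix (Fin n) (Fin n) ℂ, Ξ = Mᴴ * M := by
    open scoped MatrixOrder Matrix.Norms.L2Operator in
    exact CStarAlgebra.nonneg_iff_eq_star_mul_self.mp hΞ.nonneg
  set Mz : Matrix (Fin n) (Fin n) ℂ[X] := 1 - (X : ℂ[X]) • A.map C with hMzdef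
  set f : ℂ[X] := Mz.det with hfdef
  set q : Matrix (Fin n) (Fin 1) ℂ[X] := Mz.adjugate * B.map C with hqdef
  have hmapMz : ∀ z : ℂ, Mz.map (eval z) = 1 - z • A := by
    intro z
    ext i j
    simp [hMzdef, Matrix.map_apply, Matrix.sub_apply, Matrix.smul_apply, Matrix.one_apply,
      smul_eq_mul, apply_ite (Polynomial.eval z)]
    ring
  have hfeval : ∀ z : ℂ, f.eval z = (1 - z • A).det := by
    intro z
    have h := RingHom.map_det (evalRingHom z) Mz
    rw [RingHom.mapMatrix_apply] at h
    rw [hfdef, ← coe_evalRingHom, h]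
    exact congrArg Matrix.det (hmapMz z)
  have hadj : ∀ z : ℂ, (Mz.adjugate).map (eval z) = (1 - z • A).adjugate := by
    intro z
    have h := RingHom.map_adjugate (evalRingHom z) Mz
    rw [RingHom.mapMatrix_apply, RingHom.mapMatrix_apply] at h
    calc Mz.adjugate.map (eval z) = Mz.adjugate.map ⇑(evalRingHom z) := rfl
    _ = (Mz.map ⇑(evalRingHom z)).adjugate := h
    _ = (1 - z • A).adjugate := by rw [show Mz.map ⇑(evalRingHom z) = Mz.map (eval z) from rfl, hmapMz z]
  have hqeval : ∀ z : ℂ, q.map (eval z) = (1 - z • A).adjugate * B := by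
    intro z
    calc q.map (eval z) = (Mz.adjugate * B.map C).map ⇑(evalRingHom z) := by rw [hqdef]; rfl
    _ = (Mz.adjugate).map ⇑(evalRingHom z) * (B.map C).map ⇑(evalRingHom z) := Matrix.map_mul
    _ = (1 - z • A).adjugate * B := by
        rw [show (Mz.adjugate).map ⇑(evalRingHom z) = (Mz.adjugate).map (eval z) from rfl, hadj]
        congr 1
        ext i j
        simp [Matrix.map_apply]
  have hfne : ∀ z : ℂ, ‖z‖ ≤ 1 → f.eval z ≠ 0 := by
    intro z hz
    rw [hfeval]
    by_cases hz0 : z = 0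
    · subst hz0; simp
    intro hdet
    have hzinv : z⁻¹ ∈ spectrum ℂ A := by
      rw [spectrum.mem_iff,
        show algebraMap ℂ (Matrix (Fin n) (Fin n) ℂ) z⁻¹ = z⁻¹ • 1 from
          Algebra.algebraMap_eq_smul_one _,
        Matrix.isUnit_iff_isUnit_det, isUnit_iff_ne_zero]
      intro hne
      apply hne
      have h1 : z • (z⁻¹ • (1 : Matrix (Fin n) (Fin n) ℂ) - A) = 1 - z • A := by
        rw [smul_sub, smul_smul, mul_inv_cancel₀ hz0, one_smul]
      have h2 : (z • (z⁻¹ • (1 : Matrix (Fin n) (Fin n) ℂ) - A)).det = 0 := by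
        rw [h1, hdet]
      rw [Matrix.det_smul] at h2
      exact (mul_eq_zero.1 h2).resolve_left (pow_ne_zero _ hz0)
    have hlt := hA z⁻¹ hzinv
    have hge : (1:ℝ) ≤ ‖z⁻¹‖ := by
      rw [norm_inv]
      rw [one_le_inv_iff₀]
      refine ⟨norm_pos_iff.2 hz0, ?_⟩
      exact hz
    linarith
  have hG : ∀ z : ℂ, (1 - z • A)⁻¹ * B = (f.eval z)⁻¹ • (q.map (eval z)) := by
    intro z
    rw [Matrix.inv_def, Ring.inverse_eq_inv, hqeval z, ← hfeval z, Matrix.smul_mul]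
  -- algebraic identity q = f • s + X^n • T
  set s : Matrix (Fin n) (Fin 1) ℂ[X] :=
    ∑ l ∈ Finset.range n, (X:ℂ[X])^l • ((A^l * B).map C) with hsdef
  set T : Matrix (Fin n) (Fin 1) ℂ[X] := Mz.adjugate * ((A^n * B).map C) with hTdef
  have hf0 : f ≠ 0 := by
    intro h
    have h1 := hfeval 0
    rw [h] at h1
    simp at h1
  have hq_eq : q = f • s + (X:ℂ[X])^n • T := by
    have hkey : Mz * q = f • (B.map C) := by
      rw [hqdef, ← Matrix.mul_assoc, Matrix.mul_adjugate, Matrix.smul_mul, Matrix.one_mul, hfdef]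
    have hterm : ∀ l, Mz * (((X:ℂ[X])^l • ((A^l * B).map C)) : Matrix (Fin n) (Fin 1) ℂ[X])
        = ((X:ℂ[X])^l • ((A^l * B).map C) : Matrix (Fin n) (Fin 1) ℂ[X])
          - ((X:ℂ[X])^(l+1) • ((A^(l+1) * B).map C) : Matrix (Fin n) (Fin 1) ℂ[X]) := by
      intro l
      have hAc : (A.map C : Matrix (Fin n) (Fin n) ℂ[X]) * ((A^l * B).map C)
          = ((A^(l+1) * B).map C : Matrix (Fin n) (Fin 1) ℂ[X]) := by
        rw [← Matrix.map_mul]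
        congr 1
        rw [pow_succ', Matrix.mul_assoc]
      rw [Matrix.mul_smul, hMzdef, Matrix.sub_mul, Matrix.one_mul, Matrix.smul_mul, hAc,
        smul_sub, smul_smul, ← pow_succ]
    have hMzs : Mz * s = B.map C - (X:ℂ[X])^n • ((A^n * B).map C) := by
      rw [hsdef, Matrix.mul_sum, Finset.sum_congr rfl (fun l _ => hterm l),
        Finset.sum_range_sub' (fun l => (X:ℂ[X])^l • ((A^l * B).map C)) n]
      simp
    have h3 : Mz * (q - f • s) = (f * (X:ℂ[X])^n) • ((A^n * B).map C) := by
      rw [Matrix.mul_sub, hkey, Matrix.mul_smul, hMzs, smul_sub, sub_sub_cancel, smul_smul]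
    have h4 : f • (q - f • s) = f • ((X:ℂ[X])^n • T) := by
      have hl : f • (q - f • s) = Mz.adjugate * (Mz * (q - f • s)) := by
        rw [← Matrix.mul_assoc, Matrix.adjugate_mul, Matrix.smul_mul, Matrix.one_mul, hfdef]
      rw [hl, h3, Matrix.mul_smul, hTdef, smul_smul, mul_comm f, ← smul_smul]
    have h5 : q - f • s = (X:ℂ[X])^n • T := by
      apply Matrix.ext
      intro i j
      have h6 := congrArg (fun (Mm : Matrix (Fin n) (Fin 1) ℂ[X]) => Mm i j) h4
      simp only [Matrix.smul_apply, smul_eq_mul] at h6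
      exact mul_left_cancel₀ hf0 h6
    rw [← h5]
    abel
  have hqdeg : ∀ i : Fin n, (q i 0).natDegree ≤ n - 1 := by
    intro i
    rw [hqdef, Matrix.mul_apply]
    apply natDegree_sum_le_of_forall_le
    intro k _
    refine natDegree_mul_le.trans ?_
    have h1 := natDegree_adjugate_entry A i k
    have h2 : ((B.map C) k 0).natDegree = 0 := by simp [Matrix.map_apply]
    rw [← hMzdef] at h1
    omega
  -- the linear map and its surjectivity
  have hspan : ∀ r : ℂ[X], r.natDegree ≤ n - 1 →
      ∃ v : Fin n → ℂ, ∑ j, C (v j) * q j 0 = r := by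
    let Λ : (Fin n → ℂ) →ₗ[ℂ] ℂ[X] :=
      { toFun := fun v => ∑ j, C (v j) * q j 0
        map_add' := by
          intro a b
          simp [add_mul, Finset.sum_add_distrib]
        map_smul' := by
          intro c a
          simp [smul_eq_C_mul, Finset.mul_sum, mul_assoc] }
    have hΛapp : ∀ v : Fin n → ℂ, Λ v = ∑ j, C (v j) * q j 0 := fun v => rfl
    have hΛdeg : ∀ v, (Λ v).natDegree ≤ n - 1 := by
      intro v
      rw [hΛapp]
      apply natDegree_sum_le_of_forall_le
      intro j _
      refine natDegree_mul_le.trans ?_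
      simpa using hqdeg j
    have hmemdegLT : ∀ p : ℂ[X], p.natDegree ≤ n - 1 → p ∈ degreeLT ℂ n := by
      intro p hp
      rw [Polynomial.mem_degreeLT]
      by_cases hp0 : p = 0
      · rw [hp0, degree_zero]
        exact WithBot.bot_lt_coe n
      · rw [degree_eq_natDegree hp0]
        have hlt : p.natDegree < n := by omega
        exact_mod_cast hlt
    let Λ' : (Fin n → ℂ) →ₗ[ℂ] degreeLT ℂ n :=
      Λ.codRestrict (degreeLT ℂ n) (fun v => hmemdegLT _ (hΛdeg v))
    have hinj : Function.Injective Λ' := by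
      rw [injective_iff_map_eq_zero]
      intro v hv
      have hΛv : Λ v = 0 := by
        have := congrArg Subtype.val hv
        simpa [Λ', LinearMap.codRestrict] using this
      set P : ℂ[X] := ∑ j, C (v j) * s j 0 with hP
      set Q : ℂ[X] := ∑ j, C (v j) * T j 0 with hQ
      have hdecomp : f * P + (X:ℂ[X])^n * Q = 0 := by
        rw [hP, hQ, Finset.mul_sum, Finset.mul_sum, ← Finset.sum_add_distrib]
        rw [← hΛv, hΛapp]
        refine Finset.sum_congr rfl fun j _ => ?_
        rw [hq_eq]
        simp only [Matrix.add_apply, Matrix.smul_apply, smul_eq_mul]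
        ring
      have hsdeg : ∀ j : Fin n, ((s j 0 : ℂ[X])).natDegree ≤ n - 1 := by
        intro j
        rw [hsdef, Matrix.sum_apply]
        apply natDegree_sum_le_of_forall_le
        intro l hl
        simp only [Matrix.smul_apply, smul_eq_mul]
        refine natDegree_mul_le.trans ?_
        rw [show ((A^l * B).map C) j 0 = C ((A^l * B) j 0) from rfl,
          natDegree_C, natDegree_pow, natDegree_X]
        have := Finset.mem_range.1 hl
        omega
      have hPdeg : P.natDegree ≤ n - 1 := by
        rw [hP]
        apply natDegree_sum_le_of_forall_le
        intro j _
        refine natDegree_mul_le.trans ?_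
        simpa using hsdeg j
      have hPzero : P = 0 := by
        by_contra hPne
        have hfP : f * P ≠ 0 := mul_ne_zero hf0 hPne
        have hdvd : (X:ℂ[X])^n ∣ f * P :=
          ⟨-Q, by linear_combination hdecomp⟩
        have hm : n ≤ rootMultiplicity 0 (f * P) := by
          rw [le_rootMultiplicity_iff hfP]
          simpa using hdvd
        rw [rootMultiplicity_mul hfP] at hm
        have hf00 : rootMultiplicity 0 f = 0 := by
          apply rootMultiplicity_eq_zero
          intro hroot
          have h1 := hfeval 0
          rw [hroot] at h1
          simp at h1
        have hPm : rootMultiplicity 0 P ≤ n - 1 := by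
          refine le_trans ?_ hPdeg
          have hd := natDegree_le_of_dvd (pow_rootMultiplicity_dvd P 0) hPne
          simpa using hd
        omega
      have hcoeff : ∀ m : Fin n, (0:ℂ) = ∑ j, v j * (A^(m:ℕ) * B) j 0 := by
        intro m
        have h0 : P.coeff m = 0 := by rw [hPzero]; simp
        rw [← h0, hP, finset_sum_coeff]
        refine Finset.sum_congr rfl fun j _ => ?_
        rw [coeff_C_mul]
        congr 1
        rw [hsdef, Matrix.sum_apply, finset_sum_coeff]
        rw [Finset.sum_eq_single (m:ℕ)]
        · simp only [Matrix.smul_apply, smul_eq_mul]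
          rw [show ((A^(m:ℕ) * B).map C) j 0 = C ((A^(m:ℕ) * B) j 0) from rfl]
          rw [mul_comm, coeff_C_mul, coeff_X_pow]
          simp
        · intro l hlmem hlne
          simp only [Matrix.smul_apply, smul_eq_mul]
          rw [show ((A^l * B).map C) j 0 = C ((A^l * B) j 0) from rfl]
          rw [mul_comm, coeff_C_mul, coeff_X_pow]
          simp [Ne.symm hlne]
        · intro hnotmem
          exact absurd (Finset.mem_range.2 m.isLt) hnotmem
      have hvec : Matrix.vecMul v (Matrix.of fun (i : Fin n) (j : Fin n) => (A ^ (j:ℕ) * B) i 0) = 0 := by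
        funext m
        simp only [Matrix.vecMul, dotProduct, Matrix.of_apply, Pi.zero_apply]
        exact (hcoeff m).symm
      have hdet : IsUnit (Matrix.of fun (i : Fin n) (j : Fin n) => (A ^ (j:ℕ) * B) i 0).det :=
        (Matrix.isUnit_iff_isUnit_det _).1 hreach
      have hres := congrArg
        (fun w => Matrix.vecMul w (Matrix.of fun (i : Fin n) (j : Fin n) => (A ^ (j:ℕ) * B) i 0)⁻¹) hvec
      simpa [Matrix.vecMul_vecMul, Matrix.mul_nonsing_inv _ hdet, Matrix.vecMul_one,
        Matrix.zero_vecMul] using hres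
    haveI : FiniteDimensional ℂ (degreeLT ℂ n) :=
      Module.Finite.equiv (Polynomial.degreeLTEquiv ℂ n).symm
    have hfr : Module.finrank ℂ (Fin n → ℂ) = Module.finrank ℂ (degreeLT ℂ n) := by
      rw [Module.finrank_fin_fun, (Polynomial.degreeLTEquiv ℂ n).finrank_eq, Module.finrank_fin_fun]
    have hsurj := (LinearMap.injective_iff_surjective_of_finrank_eq_finrank hfr).1 hinj
    intro r hrd
    obtain ⟨v, hv⟩ := hsurj ⟨r, hmemdegLT r hrd⟩
    refine ⟨v, ?_⟩
    have := congrArg Subtype.val hv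
    simpa [Λ', LinearMap.codRestrict, hΛapp] using this
  -- build u and F, apply fejer_riesz
  set u : Fin n → ℂ[X] := fun i => ∑ j, C (M i j) * q j 0 with hudef
  have hudeg : ∀ i, (u i).natDegree ≤ n - 1 := by
    intro i
    apply natDegree_sum_le_of_forall_le
    intro j _
    refine natDegree_mul_le.trans ?_
    have := hqdeg j
    simp only [natDegree_C, zero_add]
    exact this
  set F : ℂ[X] := ∑ i, u i * reflect (n-1) ((u i).map (starRingEnd ℂ)) with hFdef
  have hFdeg : F.natDegree ≤ 2*(n-1) := by
    apply natDegree_sum_le_of_forall_le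
    intro i _
    refine natDegree_mul_le.trans ?_
    have h1 := hudeg i
    have h2 : ((u i).map (starRingEnd ℂ)).natDegree ≤ n - 1 := natDegree_map_le.trans (hudeg i)
    have h3 := natDegree_reflect_le h2
    omega
  have hFeval : ∀ θ : ℝ, F.eval (e θ)
      = (∑ i, (starRingEnd ℂ) ((u i).eval (e θ)) * (u i).eval (e θ)) * (e θ)^(n-1) := by
    intro θ
    rw [hFdef, eval_finset_sum, Finset.sum_mul]
    refine Finset.sum_congr rfl fun i _ => ?_
    rw [eval_mul, eval_reflect (natDegree_map_le.trans (hudeg i)) (e_ne_zero θ),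
      show (e θ)⁻¹ = (starRingEnd ℂ) (e θ) from (conj_e θ).symm, eval_map_conj]
    ring
  have hFpos : ∀ θ : ℝ, 0 ≤ F.eval (e θ) / (e θ)^(n-1) := by
    intro θ
    rw [hFeval θ, mul_div_cancel_right₀ _ (pow_ne_zero _ (e_ne_zero θ))]
    exact Finset.sum_nonneg fun i _ => star_mul_self_nonneg _
  obtain ⟨r, hrdeg, hr⟩ := fejer_riesz (n-1) F hFdeg hFpos
  obtain ⟨v, hv⟩ := hspan r hrdeg
  refine ⟨Matrix.of (fun (_ : Fin 1) j => v j), ?_⟩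
  intro θ _
  set z := Complex.exp ((θ:ℝ) * Complex.I) with hz
  have hze : z = SpecFact.e θ := rfl
  have hzabs : ‖z‖ ≤ 1 := by
    rw [hz]
    rw [Complex.norm_exp]
    simp
  have hz0 : z ≠ 0 := Complex.exp_ne_zero _
  have hfz : f.eval z ≠ 0 := hfne z hzabs
  have hGf : (1 - z • A)⁻¹ * B = (f.eval z)⁻¹ • (q.map (eval z)) := hG z
  set G : Matrix (Fin n) (Fin 1) ℂ := (1 - z • A)⁻¹ * B with hGdef
  have hGentry : ∀ j, G j 0 = (f.eval z)⁻¹ * (q j 0).eval z := by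
    intro j
    rw [hGf]
    simp [Matrix.smul_apply, Matrix.map_apply, smul_eq_mul]
  have hLHS : ((Gᴴ * Ξ * G) 0 0)
      = ((starRingEnd ℂ) ((f.eval z)⁻¹) * (f.eval z)⁻¹) *
        ∑ i, (starRingEnd ℂ) ((u i).eval z) * ((u i).eval z) := by
    rw [hM]
    have hassoc : Gᴴ * (Mᴴ * M) * G = (M * G)ᴴ * (M * G) := by
      simp only [Matrix.conjTranspose_mul, Matrix.mul_assoc]
    rw [hassoc, Matrix.mul_apply, Finset.mul_sum]
    refine Finset.sum_congr rfl fun i _ => ?_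
    rw [Matrix.conjTranspose_apply]
    rw [show (Star.star : ℂ → ℂ) = (starRingEnd ℂ) from Complex.star_def]
    have hMG : (M * G) i 0 = (f.eval z)⁻¹ * (u i).eval z := by
      rw [Matrix.mul_apply]
      rw [show (u i).eval z = ∑ j, M i j * (q j 0).eval z from by
        rw [hudef, eval_finset_sum]
        exact Finset.sum_congr rfl fun j _ => by rw [eval_mul, eval_C]]
      rw [Finset.mul_sum]
      refine Finset.sum_congr rfl fun j _ => ?_
      rw [hGentry j]
      ring
    rw [hMG, _root_.map_mul]
    ring
  have hS : ∑ i, (starRingEnd ℂ) ((u i).eval z) * ((u i).eval z)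
      = (starRingEnd ℂ) (r.eval z) * r.eval z := by
    have h1 := hFeval θ
    have h2 := hr θ
    rw [← hze] at h1 h2
    exact mul_right_cancel₀ (pow_ne_zero _ hz0) (h1.symm.trans h2)
  have hRHS : ((Matrix.of (fun (_ : Fin 1) j => v j) : Matrix (Fin 1) (Fin n) ℂ) * G) 0 0
      = (f.eval z)⁻¹ * r.eval z := by
    rw [Matrix.mul_apply]
    rw [show r = ∑ j, C (v j) * q j 0 from hv.symm, eval_finset_sum, Finset.mul_sum]
    refine Finset.sum_congr rfl fun j _ => ?_
    rw [hGentry j, eval_mul, eval_C]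
    simp only [Matrix.of_apply]
    ring
  rw [hLHS, hRHS]
  have habs2 : ((‖(f.eval z)⁻¹ * r.eval z‖ : ℝ) : ℂ)^2
      = (starRingEnd ℂ) ((f.eval z)⁻¹ * r.eval z) * ((f.eval z)⁻¹ * r.eval z) := by
    rw [← Complex.ofReal_pow, Complex.sq_norm, Complex.normSq_eq_conj_mul_self]
  rw [habs2, _root_.map_mul, hS]
  ring
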